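/- Let P be a Horn constraint program and M a model of P. Then M is an M-maximal model of P, and Can(P,M) is the least M-maximal model of P (i.e., Can(P,M) is M-maximal and is contained in every M-maximal model of P). -/

import Mathlib

universe u

/-- A constraint `A = (X, C)`: domain `X` and a family `C` of subsets of `X`. -/
structure Constraint (α : Type u) where
  dom : Set α
  sat : Set (Set α)
  sat_sub : ∀ Y ∈ sat, Y ⊆ dom

/-- `M ⊨ A` iff `M ∩ Dom(A) ∈ C`. -/
def Constraint.Sat {α : Type u} (M : Set α) (A : Constraint α) : Prop :=
  M ∩ A.dom ∈ A.sat

/-- A constraint is monotone if its satisfying family is closed under supersets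
within the domain. -/
def Constraint.Mono {α : Type u} (A : Constraint α) : Prop :=
  ∀ W Y : Set α, W ∈ A.sat → W ⊆ Y → Y ⊆ A.dom → Y ∈ A.sat

/-- A rule `A ← A₁,…,A_k, not(A_{k+1}),…,not(A_m)`. -/
structure Rule (α : Type u) where
  head : Constraint α
  pos : Set (Constraint α)
  neg : Set (Constraint α)

/-- A constraint program is a set of rules. -/
abbrev Program (α : Type u) := Set (Rule α)

def Rule.Horn {α : Type u} (r : Rule α) : Prop := r.neg = ∅

def Rule.Mono {α : Type u} (r : Rule α) : Prop :=
  r.head.Mono ∧ (∀ A ∈ r.pos, A.Mono) ∧ (∀ A ∈ r.neg, A.Mono)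

def Program.Horn {α : Type u} (P : Program α) : Prop := ∀ r ∈ P, r.Horn

def Program.Mono {α : Type u} (P : Program α) : Prop := ∀ r ∈ P, r.Mono

/-- `M` satisfies the body of `r`. -/
def Rule.BodySat {α : Type u} (M : Set α) (r : Rule α) : Prop :=
  (∀ A ∈ r.pos, Constraint.Sat M A) ∧ (∀ A ∈ r.neg, ¬ Constraint.Sat M A)

/-- `P(M)`: the set of `M`-applicable rules of `P`. -/
def Program.app {α : Type u} (P : Program α) (M : Set α) : Program α :=
  {r ∈ P | r.BodySat M}

/-- `hset(r) = Dom(hd(r))`. -/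
def Rule.hset {α : Type u} (r : Rule α) : Set α := r.head.dom

/-- `hset(P)`: union of the headsets of rules of `P`. -/
def Program.hset {α : Type u} (P : Program α) : Set α := ⋃ r ∈ P, r.hset

def Rule.atoms {α : Type u} (r : Rule α) : Set α :=
  r.head.dom ∪ (⋃ A ∈ r.pos, A.dom) ∪ (⋃ A ∈ r.neg, A.dom)

/-- `At(P)`: atoms occurring in domains of constraints of `P`. -/
def Program.atoms {α : Type u} (P : Program α) : Set α := ⋃ r ∈ P, r.atoms

/-- `M` is a model of `P`. -/
def Program.IsModel {α : Type u} (P : Program α) (M : Set α) : Prop :=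
  ∀ r ∈ P, r.BodySat M → Constraint.Sat M r.head

/-- `M` is a supported model of `P`. -/
def Program.Supported {α : Type u} (P : Program α) (M : Set α) : Prop :=
  P.IsModel M ∧ M ⊆ (P.app M).hset

/-- The nondeterministic one-step provability operator `T_P^nd`. -/
def Program.Tnd {α : Type u} (P : Program α) (M : Set α) : Set (Set α) :=
  {M' | M' ⊆ (P.app M).hset ∧ ∀ r ∈ P.app M, Constraint.Sat M' r.head}

/-- A `P`-computation: a transfinite sequence starting at `∅`, increasing, with
each successor step nondeterministically one-step provable, continuous at limits. -/
structure PComputation {α : Type u} (P : Program α) where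
  X : Ordinal.{u} → Set α
  zero : X 0 = ∅
  incr : ∀ o, X o ⊆ X (o + 1)
  step : ∀ o, X (o + 1) ∈ P.Tnd (X o)
  limit : ∀ o : Ordinal.{u}, Order.IsSuccLimit o → X o = ⋃ β < o, X β

/-- The result `R_t` of a computation. -/
def PComputation.result {α : Type u} {P : Program α} (t : PComputation P) : Set α :=
  ⋃ o, t.X o

/-- `M` is a derivable model of `P`: the result of some `P`-computation. -/
def Program.Derivable {α : Type u} (P : Program α) (M : Set α) : Prop :=
  ∃ t : PComputation P, t.result = M

/-- The canonical sequence `t^{P,M}`: `X₀ = ∅`, `X_{β+1} = hset(P(X_β)) ∩ M`,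
unions at limits. -/
noncomputable def canSeq {α : Type u} (P : Program α) (M : Set α) (o : Ordinal.{u}) :
    Set α :=
  Ordinal.limitRecOn o ∅ (fun _ ih => (P.app ih).hset ∩ M)
    (fun o _ ih => ⋃ β : Ordinal.{u}, ⋃ h : β < o, ih β h)

/-- `Can(P,M)`: the result of the canonical computation. -/
noncomputable def Can {α : Type u} (P : Program α) (M : Set α) : Set α :=
  ⋃ o, canSeq P M o

/-- The reduct of a single rule: drop negated literals. -/
def Rule.pos_part {α : Type u} (r : Rule α) : Rule α := ⟨r.head, r.pos, ∅⟩

/-- The reduct `P^M`. -/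
def Program.reduct {α : Type u} (P : Program α) (M : Set α) : Program α :=
  {r' | ∃ r ∈ P, (∀ A ∈ r.neg, ¬ Constraint.Sat M A) ∧ r' = r.pos_part}

/-- `M` is a stable model of `P`: a derivable model of the reduct `P^M`. -/
def Program.Stable {α : Type u} (P : Program α) (M : Set α) : Prop :=
  (P.reduct M).Derivable M

/-- `N ⊨_M P`: `N` is an `M`-maximal model of the Horn program `P`. -/
def Program.MMax {α : Type u} (P : Program α) (M N : Set α) : Prop :=
  N ⊆ M ∧ P.IsModel N ∧ M ∩ (P.app N).hset ⊆ N

/-- `(X,Y)` is an SE-model of `P`. -/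
def Program.SE {α : Type u} (P : Program α) (X Y : Set α) : Prop :=
  X ⊆ Y ∧ P.IsModel Y ∧ (P.reduct Y).MMax Y X

/-- `(X,Y)` is a UE-model of `P`. -/
def Program.UE {α : Type u} (P : Program α) (X Y : Set α) : Prop :=
  P.SE X Y ∧ ∀ X', P.SE X' Y → X ⊆ X' → X = X' ∨ X' = Y

/-- Strong equivalence of monotone-constraint programs. -/
def StrongEq {α : Type u} (P Q : Program α) : Prop :=
  ∀ R : Program α, R.Mono → ∀ M : Set α, (P ∪ R).Stable M ↔ (Q ∪ R).Stable M

/-- The rule `(D,{D}) ←`. -/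
def factRule {α : Type u} (D : Set α) : Rule α :=
  ⟨⟨D, {D}, fun Y hY => by simp only [Set.mem_singleton_iff] at hY; simp [hY]⟩, ∅, ∅⟩

/-- Uniform equivalence of monotone-constraint programs. -/
def UnifEq {α : Type u} (P Q : Program α) : Prop :=
  ∀ D : Set α, ∀ M : Set α,
    (P ∪ {factRule D}).Stable M ↔ (Q ∪ {factRule D}).Stable M

/-- `P` is tight on `M`. -/
def Program.Tight {α : Type u} (P : Program α) (M : Set α) : Prop :=
  ∃ lam : α → Ordinal.{u}, ∀ r ∈ P.app M, ∀ x ∈ M ∩ r.hset,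
    ∀ a ∈ M ∩ (⋃ A ∈ r.pos, A.dom), lam a < lam x


section Aux

open OrdinalApprox Cardinal Order

variable {α : Type u}

lemma sat_mono_aux {A : Constraint α} (hA : A.Mono) {X Y : Set α} (hXY : X ⊆ Y)
    (h : Constraint.Sat X A) : Constraint.Sat Y A :=
  hA _ _ h (Set.inter_subset_inter_left _ hXY) Set.inter_subset_right

lemma body_mono_aux {r : Rule α} (hr : r.Mono) (hH : r.Horn) {X Y : Set α} (hXY : X ⊆ Y)
    (h : r.BodySat X) : r.BodySat Y := by
  refine ⟨fun A hA => sat_mono_aux (hr.2.1 A hA) hXY (h.1 A hA), ?_⟩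
  intro A hA
  rw [Rule.Horn] at hH
  simp [hH] at hA

lemma app_mono_aux {P : Program α} (hHorn : P.Horn) (hMono : P.Mono) {X Y : Set α}
    (hXY : X ⊆ Y) : P.app X ⊆ P.app Y := by
  rintro r ⟨hrP, hb⟩
  exact ⟨hrP, body_mono_aux (hMono r hrP) (hHorn r hrP) hXY hb⟩

lemma hset_mono_aux {P Q : Program α} (h : P ⊆ Q) : P.hset ⊆ Q.hset := by
  intro x hx
  simp only [Program.hset, Set.mem_iUnion] at hx ⊢
  obtain ⟨r, hr, hxr⟩ := hx
  exact ⟨r, h hr, hxr⟩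

/-- The one-step operator of the canonical computation, as a bundled monotone map. -/
noncomputable def canOp (P : Program α) (hHorn : P.Horn) (hMono : P.Mono) (M : Set α) :
    Set α →o Set α :=
  ⟨fun X => (P.app X).hset ∩ M, fun X Y hXY =>
    Set.inter_subset_inter_left _ (hset_mono_aux (app_mono_aux hHorn hMono hXY))⟩

lemma canSeq_zero (P : Program α) (M : Set α) : canSeq P M 0 = ∅ := by
  rw [canSeq, Ordinal.limitRecOn_zero]

lemma canSeq_succ (P : Program α) (M : Set α) (o : Ordinal.{u}) :
    canSeq P M (Order.succ o) = (P.app (canSeq P M o)).hset ∩ M := by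
  rw [canSeq, Ordinal.limitRecOn_succ]
  rfl

lemma canSeq_limit (P : Program α) (M : Set α) (o : Ordinal.{u}) (h : Order.IsSuccLimit o) :
    canSeq P M o = ⋃ β : Ordinal.{u}, ⋃ _ : β < o, canSeq P M β := by
  rw [canSeq, Ordinal.limitRecOn_limit _ _ _ _ h]
  rfl

lemma canSeq_eq_lfpApprox (P : Program α) (hHorn : P.Horn) (hMono : P.Mono) (M : Set α)
    (o : Ordinal.{u}) :
    canSeq P M o = lfpApprox (canOp P hHorn hMono M) ∅ o := by
  induction o using Ordinal.induction with
  | h o IH =>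
    rcases Ordinal.zero_or_succ_or_isSuccLimit o with h0 | ⟨a, ha⟩ | hl
    · subst h0
      rw [canSeq_zero]
      apply le_antisymm (Set.empty_subset _)
      rw [lfpApprox]
      exact sup_le le_rfl (iSup₂_le fun b hb => absurd hb (not_lt_zero (a := b)))
    · subst ha
      rw [← Ordinal.add_one_eq_succ, lfpApprox_add_one _ (x := ∅) (Set.empty_subset _), Ordinal.add_one_eq_succ,
        canSeq_succ, ← IH a (Order.lt_succ a)]
      rfl
    · rw [canSeq_limit P M o hl]
      apply le_antisymm
      · apply Set.iUnion₂_subset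
        intro β hβ
        rw [IH β hβ]
        exact lfpApprox_mono_right _ hβ.le
      · rw [lfpApprox]
        refine sup_le (Set.empty_subset _) (iSup₂_le fun b hb => ?_)
        · have h1 : canOp P hHorn hMono M (lfpApprox (canOp P hHorn hMono M) ∅ b)
              = lfpApprox (canOp P hHorn hMono M) ∅ (b + 1) :=
            (lfpApprox_add_one _ (x := ∅) (Set.empty_subset _) b).symm
          rw [h1, ← IH (b + 1) (hl.succ_lt hb)]
          intro x hx
          exact Set.mem_iUnion₂.mpr ⟨b + 1, hl.succ_lt hb, hx⟩

lemma can_eq_fixed (P : Program α) (hHorn : P.Horn) (hMono : P.Mono) (M : Set α) :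
    Can P M = lfpApprox (canOp P hHorn hMono M) ∅ (ord <| succ #(Set α)) := by
  set F := canOp P hHorn hMono M
  have hfix : lfpApprox F ∅ (ord <| succ #(Set α)) ∈ Function.fixedPoints F :=
    lfpApprox_ord_mem_fixedPoint F (x := ∅) bot_le
  apply le_antisymm
  · apply Set.iUnion_subset
    intro o
    rw [canSeq_eq_lfpApprox P hHorn hMono M o]
    rcases le_or_gt o (ord <| succ #(Set α)) with h | h
    · exact lfpApprox_mono_right _ h
    · rw [lfpApprox_eq_of_mem_fixedPoints F h.le hfix]
  · rw [← canSeq_eq_lfpApprox P hHorn hMono M]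
    exact Set.subset_iUnion (canSeq P M) _

lemma can_fixed (P : Program α) (hHorn : P.Horn) (hMono : P.Mono) (M : Set α) :
    (P.app (Can P M)).hset ∩ M = Can P M := by
  have h := lfpApprox_ord_mem_fixedPoint (canOp P hHorn hMono M) (x := (∅ : Set α)) bot_le
  rw [Function.mem_fixedPoints] at h
  rw [can_eq_fixed P hHorn hMono M]
  exact h

end Aux

/-- `M` is an `M`-maximal model of `P` and `Can(P,M)` is the least
`M`-maximal model of `P`. -/
theorem mmax_and_can_least {α : Type u} (P : Program α) (hHorn : P.Horn)
    (hMono : P.Mono) (M : Set α) (hMod : P.IsModel M) :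
    P.MMax M M ∧ P.MMax M (Can P M) ∧ ∀ N : Set α, P.MMax M N → Can P M ⊆ N := by
  have hfix := can_fixed P hHorn hMono M
  have hCanM : Can P M ⊆ M := by rw [← hfix]; exact Set.inter_subset_right
  have hclose : M ∩ (P.app (Can P M)).hset ⊆ Can P M := by
    rw [Set.inter_comm]; exact hfix.le
  refine ⟨⟨Set.Subset.rfl, hMod, Set.inter_subset_left⟩, ⟨hCanM, ?_, hclose⟩, ?_⟩
  · -- `Can P M` is a model of `P`
    intro r hrP hbody
    have hrApp : r ∈ P.app (Can P M) := ⟨hrP, hbody⟩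
    have hbM : r.BodySat M := body_mono_aux (hMono r hrP) (hHorn r hrP) hCanM hbody
    have hSatM := hMod r hrP hbM
    have hdom : M ∩ r.head.dom ⊆ Can P M := by
      intro x hx
      apply hclose
      refine ⟨hx.1, ?_⟩
      simp only [Program.hset, Set.mem_iUnion]
      exact ⟨r, hrApp, hx.2⟩
    have heq : Can P M ∩ r.head.dom = M ∩ r.head.dom := by
      apply le_antisymm (Set.inter_subset_inter_left _ hCanM)
      intro x hx
      exact ⟨hdom hx, hx.2⟩
    rw [Constraint.Sat, heq]
    exact hSatM
  · -- least M-maximal model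
    intro N hN
    have key : ∀ o : Ordinal.{u}, canSeq P M o ⊆ N := by
      intro o
      induction o using Ordinal.induction with
      | h o IH =>
        rcases Ordinal.zero_or_succ_or_isSuccLimit o with h0 | ⟨a, ha⟩ | hl
        · subst h0; rw [canSeq_zero]; exact Set.empty_subset _
        · subst ha
          rw [canSeq_succ]
          intro x hx
          exact hN.2.2 ⟨hx.2,
            hset_mono_aux (app_mono_aux hHorn hMono (IH a (Order.lt_succ a))) hx.1⟩
        · rw [canSeq_limit P M o hl]
          exact Set.iUnion₂_subset IH
    exact Set.iUnion_subset key
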